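/- With the Malitsky–Tam operator T for closed subspaces U₁,…,Uₙ of X and Z = ∩_i U_i: a point z = (z₁,…,z_{n−1}) ∈ X^{n−1} is a fixed point of T if and only if z₁ ∈ Z + U₁^⊥, z_i ∈ z_{i−1} + U_i^⊥ for 2 ≤ i ≤ n−2, and z_{n−1} ∈ (z_{n−2} + U_{n−1}^⊥) ∩ (P₁z₁ + Uₙ^⊥). -/

import Mathlib

open Filter

variable {X : Type*} [NormedAddCommGroup X] [InnerProductSpace ℝ X] [CompleteSpace X]

/-- The orthogonal projection onto a subspace, as a map `X → X`. -/
noncomputable def pr (U : Submodule ℝ X) [U.HasOrthogonalProjection] (x : X) : X :=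
  Submodule.orthogonalProjectionOnto U x

/-- Extension of a tuple in `X^m` to an `ℕ`-indexed family (by zero). -/
noncomputable def extz {m : ℕ} (z : PiLp 2 (fun _ : Fin m => X)) : ℕ → X :=
  fun i => if h : i < m then z ⟨i, h⟩ else 0

/-- The auxiliary sequence `x₁, …, xₙ` of the Malitsky–Tam operator (0-based indexing):
`x 0 = P₀ (z 0)`, `x i = Pᵢ (x (i−1) + z i − z (i−1))` for `1 ≤ i ≤ n − 2`, and
`x (n−1) = P_{n−1} (x 0 + x (n−2) − z (n−2))`. -/
noncomputable def mtX (n : ℕ) (U : ℕ → Submodule ℝ X) [∀ i, (U i).HasOrthogonalProjection]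
    (z : ℕ → X) : ℕ → X
  | 0 => pr (U 0) (z 0)
  | (i + 1) =>
      if i + 1 ≤ n - 2 then pr (U (i + 1)) (mtX n U z i + z (i + 1) - z i)
      else if i + 1 = n - 1 then pr (U (n - 1)) (mtX n U z 0 + mtX n U z i - z i)
      else 0

/-- The Malitsky–Tam operator `T z = z + (x₂ − x₁, …, xₙ − x_{n−1})` on `X^{n−1}`. -/
noncomputable def mtT (n : ℕ) (U : ℕ → Submodule ℝ X) [∀ i, (U i).HasOrthogonalProjection]
    (z : PiLp 2 (fun _ : Fin (n - 1) => X)) : PiLp 2 (fun _ : Fin (n - 1) => X) :=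
  (WithLp.equiv 2 (∀ _ : Fin (n - 1), X)).symm fun j =>
    z j + (mtX n U (extz z) ((j : ℕ) + 1) - mtX n U (extz z) (j : ℕ))

/-- The diagonal embedding `X → X^m`, `x ↦ (x, …, x)`, as a linear map into `ℓ²`-product. -/
noncomputable def diagMap (m : ℕ) (X : Type*) [NormedAddCommGroup X]
    [InnerProductSpace ℝ X] : X →ₗ[ℝ] PiLp 2 (fun _ : Fin m => X) :=
  (WithLp.linearEquiv 2 ℝ (∀ _ : Fin m, X)).symm.toLinearMap ∘ₗ
    LinearMap.pi fun _ => LinearMap.id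

/-- The partial-sum operator `(y₁, …, y_m) ↦ (y₁, y₁ + y₂, …, y₁ + ⋯ + y_m)` on `X^m`. -/
noncomputable def psumL (m : ℕ) (X : Type*) [NormedAddCommGroup X]
    [InnerProductSpace ℝ X] :
    PiLp 2 (fun _ : Fin m => X) →ₗ[ℝ] PiLp 2 (fun _ : Fin m => X) :=
  (WithLp.linearEquiv 2 ℝ (∀ _ : Fin m, X)).symm.toLinearMap ∘ₗ
    (LinearMap.pi fun j : Fin m =>
      ∑ i ∈ Finset.univ.filter (fun i : Fin m => i ≤ j), LinearMap.proj i) ∘ₗ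
    (WithLp.linearEquiv 2 ℝ (∀ _ : Fin m, X)).toLinearMap

/-- The range of the partial-sum operator `Ψ` restricted to `U₁^⊥ × ⋯ × U_m^⊥`. -/
noncomputable def ranPsi (m : ℕ) (U : ℕ → Submodule ℝ X) :
    Submodule ℝ (PiLp 2 (fun _ : Fin m => X)) :=
  Submodule.map (psumL m X)
    (Submodule.comap (WithLp.linearEquiv 2 ℝ (∀ _ : Fin m, X)).toLinearMap
      (Submodule.pi Set.univ fun j : Fin m => (U (j : ℕ))ᗮ))


set_option linter.unusedSectionVars false

lemma pr_mem (U : Submodule ℝ X) [U.HasOrthogonalProjection] (x : X) : pr U x ∈ U :=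
  (Submodule.orthogonalProjectionOnto U x).2

lemma sub_pr_mem (U : Submodule ℝ X) [U.HasOrthogonalProjection] (x : X) :
    x - pr U x ∈ Uᗮ := U.sub_starProjection_mem_orthogonal x

lemma pr_add_eq {U : Submodule ℝ X} [U.HasOrthogonalProjection] {a b : X}
    (ha : a ∈ U) (hb : b ∈ Uᗮ) : pr U (a + b) = a := by
  unfold pr
  rw [map_add, Submodule.orthogonalProjectionOnto_apply_of_mem_orthogonal hb]
  rw [add_zero]; exact congrArg Subtype.val (U.orthogonalProjectionOnto_mem_subspace_eq_self ⟨a, ha⟩)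

lemma mtX_zero {n : ℕ} (U : ℕ → Submodule ℝ X) [∀ i, (U i).HasOrthogonalProjection]
    (z : ℕ → X) : mtX n U z 0 = pr (U 0) (z 0) := by rw [mtX]

lemma mtX_succ {n : ℕ} (U : ℕ → Submodule ℝ X) [∀ i, (U i).HasOrthogonalProjection]
    (z : ℕ → X) {i : ℕ} (h : i + 1 ≤ n - 2) :
    mtX n U z (i + 1) = pr (U (i + 1)) (mtX n U z i + z (i + 1) - z i) := by
  rw [mtX, if_pos h]

lemma mtX_last {n : ℕ} (U : ℕ → Submodule ℝ X) [∀ i, (U i).HasOrthogonalProjection]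
    (z : ℕ → X) {i : ℕ} (h1 : ¬ i + 1 ≤ n - 2) (h2 : i + 1 = n - 1) :
    mtX n U z (i + 1) = pr (U (n - 1)) (mtX n U z 0 + mtX n U z i - z i) := by
  conv_lhs => rw [mtX]
  rw [if_neg h1, if_pos h2]

lemma aux_mt (k : ℕ) (U : ℕ → Submodule ℝ X) [∀ i, CompleteSpace (U i)] (w : ℕ → X) :
    (∀ i < k + 2, mtX (k + 3) U w (i + 1) = mtX (k + 3) U w i) ↔
      (w 0 ∈ (⨅ i : Fin (k + 3), U (i : ℕ)) ⊔ (U 0)ᗮ ∧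
        (∀ i, 1 ≤ i → i ≤ k → w i - w (i - 1) ∈ (U i)ᗮ) ∧
        w (k + 1) - w k ∈ (U (k + 1))ᗮ ∧
        w (k + 1) - pr (U 0) (w 0) ∈ (U (k + 2))ᗮ) := by
  constructor
  · intro h
    have hall : ∀ i, i ≤ k + 2 → mtX (k + 3) U w i = mtX (k + 3) U w 0 := by
      intro i hi
      induction i with
      | zero => rfl
      | succ i ih => rw [h i (by omega)]; exact ih (by omega)
    have hz0 := mtX_zero (n := k + 3) U w
    have hc0 : mtX (k + 3) U w 0 ∈ U 0 := by rw [hz0]; exact pr_mem _ _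
    have hsub0 : w 0 - mtX (k + 3) U w 0 ∈ (U 0)ᗮ := by rw [hz0]; exact sub_pr_mem _ _
    have hmid : ∀ i, 1 ≤ i → i ≤ k + 1 →
        mtX (k + 3) U w 0 ∈ U i ∧ w i - w (i - 1) ∈ (U i)ᗮ := by
      intro i h1 h2
      obtain ⟨j, rfl⟩ : ∃ j, i = j + 1 := ⟨i - 1, by omega⟩
      have he : mtX (k + 3) U w (j + 1)
          = pr (U (j + 1)) (mtX (k + 3) U w j + w (j + 1) - w j) := mtX_succ U w (by omega)
      have hcj : mtX (k + 3) U w (j + 1) = mtX (k + 3) U w 0 := hall _ (by omega)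
      have hcj' : mtX (k + 3) U w j = mtX (k + 3) U w 0 := hall _ (by omega)
      constructor
      · rw [← hcj, he]; exact pr_mem _ _
      · have h5 := sub_pr_mem (U (j + 1)) (mtX (k + 3) U w j + w (j + 1) - w j)
        rw [← he, hcj, hcj'] at h5
        have heq : mtX (k + 3) U w 0 + w (j + 1) - w j - mtX (k + 3) U w 0
            = w (j + 1) - w j := by abel
        rw [heq] at h5
        exact h5
    have hel : mtX (k + 3) U w (k + 2)
        = pr (U (k + 2)) (mtX (k + 3) U w 0 + mtX (k + 3) U w (k + 1) - w (k + 1)) := by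
      have := mtX_last (n := k + 3) U w (i := k + 1) (by omega) (by omega)
      exact this
    have hck2 : mtX (k + 3) U w 0 ∈ U (k + 2) := by
      rw [← hall (k + 2) le_rfl, hel]; exact pr_mem _ _
    have hsubl : mtX (k + 3) U w 0 - w (k + 1) ∈ (U (k + 2))ᗮ := by
      have h5 := sub_pr_mem (U (k + 2))
        (mtX (k + 3) U w 0 + mtX (k + 3) U w (k + 1) - w (k + 1))
      rw [← hel, hall (k + 2) le_rfl, hall (k + 1) (by omega)] at h5
      have heq : mtX (k + 3) U w 0 + mtX (k + 3) U w 0 - w (k + 1) - mtX (k + 3) U w 0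
          = mtX (k + 3) U w 0 - w (k + 1) := by abel
      rw [heq] at h5
      exact h5
    have hcZ : mtX (k + 3) U w 0 ∈ ⨅ i : Fin (k + 3), U (i : ℕ) := by
      rw [Submodule.mem_iInf]
      intro i
      rcases Nat.eq_zero_or_pos (i : ℕ) with h0 | h0
      · rw [h0]; exact hc0
      · rcases Nat.lt_or_ge (i : ℕ) (k + 2) with h2 | h2
        · exact (hmid (i : ℕ) h0 (by omega)).1
        · have hik : (i : ℕ) = k + 2 := by omega
          rw [hik]; exact hck2
    refine ⟨?_, fun i h1 h2 => (hmid i h1 (by omega)).2, ?_, ?_⟩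
    · have heq : w 0 = mtX (k + 3) U w 0 + (w 0 - mtX (k + 3) U w 0) := by abel
      rw [heq]
      exact Submodule.add_mem_sup hcZ hsub0
    · have := (hmid (k + 1) (by omega) le_rfl).2
      simpa using this
    · have h5 := Submodule.neg_mem _ hsubl
      rw [← hz0]
      simpa using h5
  · rintro ⟨h1, h2, h3, h4⟩
    obtain ⟨c, hcZ, u, hu, hcu⟩ := Submodule.mem_sup.mp h1
    have hcU : ∀ i, i ≤ k + 2 → c ∈ U i := by
      intro i hi
      exact (Submodule.mem_iInf _).mp hcZ ⟨i, by omega⟩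
    have hx0 : mtX (k + 3) U w 0 = c := by
      rw [mtX_zero, ← hcu]
      exact pr_add_eq (hcU 0 (by omega)) hu
    have hmem : ∀ i, 1 ≤ i → i ≤ k + 1 → w i - w (i - 1) ∈ (U i)ᗮ := by
      intro i hi1 hi2
      rcases Nat.lt_or_ge i (k + 1) with h' | h'
      · exact h2 i hi1 (by omega)
      · have : i = k + 1 := by omega
        subst this
        simpa using h3
    have hxsc : ∀ i, i ≤ k + 1 → mtX (k + 3) U w i = c := by
      intro i hi
      induction i with
      | zero => exact hx0
      | succ i ih =>
        rw [mtX_succ U w (show i + 1 ≤ k + 3 - 2 by omega), ih (by omega)]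
        have harg : c + w (i + 1) - w i = c + (w (i + 1) - w i) := by abel
        rw [harg]
        exact pr_add_eq (hcU (i + 1) (by omega)) (by simpa using hmem (i + 1) (by omega) hi)
    have hxl : mtX (k + 3) U w (k + 2) = c := by
      rw [mtX_last (n := k + 3) U w (i := k + 1) (by omega) (by omega),
        hx0, hxsc (k + 1) le_rfl]
      have harg : c + c - w (k + 1) = c + (c - w (k + 1)) := by abel
      rw [harg]
      refine pr_add_eq (hcU (k + 2) le_rfl) ?_
      have hprc : pr (U 0) (w 0) = c := by rw [← mtX_zero (n := k + 3)]; exact hx0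
      have h4' : w (k + 1) - c ∈ (U (k + 2))ᗮ := by rw [← hprc]; exact h4
      simpa using Submodule.neg_mem _ h4'
    intro i hi
    have ha : mtX (k + 3) U w (i + 1) = c := by
      rcases Nat.lt_or_ge i (k + 1) with h' | h'
      · exact hxsc (i + 1) (by omega)
      · have : i = k + 1 := by omega
        subst this
        exact hxl
    rw [ha, hxsc i (by omega)]

/-- `z = (z₀, …, z_{n−2})` is a fixed point of the Malitsky–Tam operator iff
`z₀ ∈ Z + U₀^⊥`, `zᵢ ∈ z_{i−1} + Uᵢ^⊥` for `1 ≤ i ≤ n − 3`, and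
`z_{n−2} ∈ (z_{n−3} + U_{n−2}^⊥) ∩ (P₀ z₀ + U_{n−1}^⊥)` (all indices 0-based; in the paper's
1-based notation these are exactly `z₁ ∈ Z + U₁^⊥`, `zᵢ ∈ z_{i−1} + Uᵢ^⊥` for `2 ≤ i ≤ n−2`,
and `z_{n−1} ∈ (z_{n−2} + U_{n−1}^⊥) ∩ (P₁z₁ + Uₙ^⊥)`). -/
theorem stmt15 (n : ℕ) (hn : 3 ≤ n) (U : ℕ → Submodule ℝ X) [∀ i, CompleteSpace (U i)]
    (z : PiLp 2 (fun _ : Fin (n - 1) => X)) :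
    mtT n U z = z ↔
      (extz z 0 ∈ (⨅ i : Fin n, U (i : ℕ)) ⊔ (U 0)ᗮ ∧
        (∀ i, 1 ≤ i → i ≤ n - 3 → extz z i - extz z (i - 1) ∈ (U i)ᗮ) ∧
        extz z (n - 2) - extz z (n - 3) ∈ (U (n - 2))ᗮ ∧
        extz z (n - 2) - pr (U 0) (extz z 0) ∈ (U (n - 1))ᗮ) := by
  obtain ⟨k, rfl⟩ : ∃ k, n = k + 3 := ⟨n - 3, by omega⟩
  have hfix : mtT (k + 3) U z = z ↔
      ∀ i < k + 2, mtX (k + 3) U (extz z) (i + 1) = mtX (k + 3) U (extz z) i := by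
    constructor
    · intro h i hi
      have h2 : mtT (k + 3) U z ⟨i, hi⟩ = z ⟨i, hi⟩ := congrArg (fun v => v ⟨i, hi⟩) h
      have h3 : z ⟨i, hi⟩ + (mtX (k + 3) U (extz z) (i + 1)
          - mtX (k + 3) U (extz z) i) = z ⟨i, hi⟩ := h2
      have h4 := add_eq_left.mp h3
      exact sub_eq_zero.mp h4
    · intro h
      refine PiLp.ext fun j => ?_
      show z j + (mtX (k + 3) U (extz z) ((j : ℕ) + 1)
          - mtX (k + 3) U (extz z) (j : ℕ)) = z j
      rw [h (j : ℕ) (by omega)]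
      simp
  exact hfix.trans (aux_mt k U (extz z))
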